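/- (Example 3, the braided theta) The pure braid b := (σ_2^{−1} σ_1^{−1} σ_3^{−1} σ_2^{−1} σ_4 σ_3 σ_5 σ_4)^3 in B_6 is topologically trivial, i.e., b lies in the subgroup R_6 of B_6 generated by the full twist d and the flips r_1, …, r_6. -/

import Mathlib

namespace Braid

/-- Braid relations on generators indexed by `Fin m`; the generator `i : Fin m` stands for the
Artin generator `σ_{i+1}` of the braid group on `m+1` strands: the relations are
`σ_i σ_j = σ_j σ_i` for `|i-j| ≥ 2` and `σ_i σ_{i+1} σ_i = σ_{i+1} σ_i σ_{i+1}`. -/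
def braidRels (m : ℕ) : Set (FreeGroup (Fin m)) :=
  {r | ∃ i j : Fin m, i.val + 2 ≤ j.val ∧
      r = .of i * .of j * (.of j * .of i)⁻¹} ∪
  {r | ∃ (i : Fin m) (hij : i.val + 1 < m),
      r = .of i * .of ⟨i.val + 1, hij⟩ * .of i *
        (.of ⟨i.val + 1, hij⟩ * .of i * .of ⟨i.val + 1, hij⟩)⁻¹}

/-- The Artin braid group `B_n` on `n` strands, presented with generators `σ_1, …, σ_{n-1}`
and the braid relations. -/
def BraidGroup (n : ℕ) : Type := PresentedGroup (braidRels (n - 1))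

instance (n : ℕ) : Group (BraidGroup n) := by unfold BraidGroup; infer_instance

/-- The Artin generator `σ_i` of `B_n`, for `1 ≤ i ≤ n-1` (junk value `1` otherwise). -/
def σ (n : ℕ) (i : ℕ) : BraidGroup n :=
  if h : 1 ≤ i ∧ i ≤ n - 1 then PresentedGroup.of ⟨i - 1, by omega⟩ else 1

/-- The ascending product `σ_a σ_{a+1} ⋯ σ_b` (empty product if `b < a`). -/
def up (n a b : ℕ) : BraidGroup n := ((List.range' a (b + 1 - a)).map (σ n)).prod

/-- The descending product `σ_a σ_{a-1} ⋯ σ_b` (empty product if `a < b`). -/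
def down (n a b : ℕ) : BraidGroup n :=
  ((List.range' b (a + 1 - b)).reverse.map (σ n)).prod

/-- The full twist `d = (σ_{n-1} ⋯ σ_2 σ_1)^n` of `B_n`. -/
def fullTwist (n : ℕ) : BraidGroup n := (down n (n - 1) 1) ^ n

/-- The flip `r_i = σ_{i-1} ⋯ σ_2 σ_1^2 σ_2 ⋯ σ_{n-2} σ_{n-1}^2 σ_{n-2} ⋯ σ_i` of `B_n`
(for `1 ≤ i ≤ n`), written as `(σ_{i-1} ⋯ σ_1) (σ_1 ⋯ σ_{n-1}) (σ_{n-1} ⋯ σ_i)`. -/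
def flip (n i : ℕ) : BraidGroup n :=
  down n (i - 1) 1 * up n 1 (n - 1) * down n (n - 1) i

/-- The descending product of flips `r_a r_{a-1} ⋯ r_b` (empty product if `a < b`). -/
def flipsDown (n a b : ℕ) : BraidGroup n :=
  ((List.range' b (a + 1 - b)).reverse.map (flip n)).prod

/-- The subgroup `R_n ⊆ B_n` generated by the full twist `d` and the flips `r_1, …, r_n`. -/
def R (n : ℕ) : Subgroup (BraidGroup n) :=
  Subgroup.closure ({fullTwist n} ∪ flip n '' Set.Icc 1 n)

/-- The subgroup `R_n' ⊆ B_n` generated by the flips `r_1, …, r_n`. -/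
def R' (n : ℕ) : Subgroup (BraidGroup n) :=
  Subgroup.closure (flip n '' Set.Icc 1 n)

private lemma swap_braid {n : ℕ} (a b c : Fin n) (hab : a ≠ b) (hbc : b ≠ c) (hac : a ≠ c) :
    Equiv.swap a b * Equiv.swap b c * Equiv.swap a b
      = Equiv.swap b c * Equiv.swap a b * Equiv.swap b c := by
  have h1 : Equiv.swap b a * Equiv.swap c b * Equiv.swap b a = Equiv.swap a c :=
    Equiv.swap_mul_swap_mul_swap (Ne.symm hbc) hac.symm
  have h2 : Equiv.swap b c * Equiv.swap a b * Equiv.swap b c = Equiv.swap c a :=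
    Equiv.swap_mul_swap_mul_swap hab hac
  rw [h2, Equiv.swap_comm a b, Equiv.swap_comm b c, h1, Equiv.swap_comm a c]

private lemma swap_commute {n : ℕ} (a b c d : Fin n)
    (hac : a ≠ c) (had : a ≠ d) (hbc : b ≠ c) (hbd : b ≠ d) :
    Equiv.swap a b * Equiv.swap c d = Equiv.swap c d * Equiv.swap a b := by
  refine Equiv.Perm.Disjoint.commute ?_
  intro x
  by_cases h1 : x = a
  · subst h1; right; exact Equiv.swap_apply_of_ne_of_ne hac had
  · by_cases h2 : x = b
    · subst h2; right; exact Equiv.swap_apply_of_ne_of_ne hbc hbd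
    · left; exact Equiv.swap_apply_of_ne_of_ne h1 h2

/-- The transposition `(i, i+1)` of `Fin n` associated to the generator `i : Fin (n-1)`. -/
def permGen (n : ℕ) (i : Fin (n - 1)) : Equiv.Perm (Fin n) :=
  Equiv.swap ⟨i.val, by have := i.isLt; omega⟩ ⟨i.val + 1, by have := i.isLt; omega⟩

/-- The homomorphism `B_n → Sym(n)` sending `σ_i` to the transposition `(i, i+1)`. -/
def toPerm (n : ℕ) : BraidGroup n →* Equiv.Perm (Fin n) :=
  PresentedGroup.toGroup (f := permGen n)
    (by
      rintro r (⟨i, j, hij, rfl⟩ | ⟨i, hij, rfl⟩) <;>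
        simp only [map_mul, map_inv, FreeGroup.lift_apply_of, permGen] <;> rw [mul_inv_eq_one]
      · refine swap_commute _ _ _ _ ?_ ?_ ?_ ?_ <;>
          · rw [ne_eq, Fin.mk.injEq]; omega
      · refine swap_braid _ _ _ ?_ ?_ ?_ <;>
          · rw [ne_eq, Fin.mk.injEq]; omega)

/-- The pure braid group `P_n`: the kernel of `B_n → Sym(n)`, `σ_i ↦ (i, i+1)`. -/
def P (n : ℕ) : Subgroup (BraidGroup n) := (toPerm n).ker

private lemma mk_rel_eq_one {m : ℕ} {r : FreeGroup (Fin m)} (h : r ∈ braidRels m) :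
    PresentedGroup.mk (braidRels m) r = 1 :=
  (QuotientGroup.eq_one_iff _).mpr (Subgroup.subset_normalClosure h)

lemma σ_comm {n i j : ℕ} (h1 : 1 ≤ i) (h2 : i + 2 ≤ j) (h3 : j ≤ n - 1) :
    σ n i * σ n j = σ n j * σ n i := by
  rw [show σ n i = (PresentedGroup.of (⟨i - 1, by omega⟩ : Fin (n - 1)) : BraidGroup n) from
      dif_pos ⟨h1, by omega⟩,
    show σ n j = (PresentedGroup.of (⟨j - 1, by omega⟩ : Fin (n - 1)) : BraidGroup n) from
      dif_pos ⟨by omega, h3⟩]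
  have hmem : (FreeGroup.of (⟨i - 1, by omega⟩ : Fin (n-1)) * .of ⟨j - 1, by omega⟩ *
      (.of ⟨j - 1, by omega⟩ * .of ⟨i - 1, by omega⟩)⁻¹) ∈ braidRels (n - 1) :=
    Or.inl ⟨⟨i - 1, by omega⟩, ⟨j - 1, by omega⟩, by show i - 1 + 2 ≤ j - 1; omega, rfl⟩
  have h := mk_rel_eq_one hmem
  rw [map_mul, map_inv, mul_inv_eq_one, map_mul, map_mul] at h
  exact h

set_option maxHeartbeats 1600000 in
lemma σ_braid {n i : ℕ} (h1 : 1 ≤ i) (h2 : i + 1 ≤ n - 1) :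
    σ n i * σ n (i + 1) * σ n i = σ n (i + 1) * σ n i * σ n (i + 1) := by
  rw [show σ n i = (PresentedGroup.of (⟨i - 1, by omega⟩ : Fin (n - 1)) : BraidGroup n) from
      dif_pos ⟨h1, by omega⟩,
    show σ n (i + 1) = (PresentedGroup.of (⟨i + 1 - 1, by omega⟩ : Fin (n - 1)) : BraidGroup n)
      from dif_pos ⟨by omega, h2⟩]
  have key : (⟨i + 1 - 1, by omega⟩ : Fin (n - 1)) = ⟨(i - 1) + 1, by omega⟩ := by
    rw [Fin.mk.injEq]; omega
  rw [key]
  have hmem : (FreeGroup.of (⟨i - 1, by omega⟩ : Fin (n-1)) * .of ⟨(i-1) + 1, by omega⟩ *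
      .of ⟨i - 1, by omega⟩ *
      (.of ⟨(i-1) + 1, by omega⟩ * .of ⟨i - 1, by omega⟩ * .of ⟨(i-1)+1, by omega⟩)⁻¹)
      ∈ braidRels (n - 1) :=
    Or.inr ⟨⟨i - 1, by omega⟩, by show i - 1 + 1 < n - 1; omega, rfl⟩
  have h := mk_rel_eq_one hmem
  rw [map_mul, map_inv, mul_inv_eq_one, map_mul, map_mul, map_mul, map_mul] at h
  exact h

/-- The canonical homomorphism `ι : B_{n-1} → B_n` determined by `σ_i ↦ σ_i`. -/
def ι (n : ℕ) : BraidGroup (n - 1) →* BraidGroup n :=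
  PresentedGroup.toGroup (f := fun i : Fin (n - 1 - 1) => σ n (i.val + 1))
    (by
      rintro r (⟨i, j, hij, rfl⟩ | ⟨i, hij, rfl⟩) <;>
        simp only [map_mul, map_inv, FreeGroup.lift_apply_of] <;> rw [mul_inv_eq_one]
      · exact σ_comm (by omega) (by omega) (by have := j.isLt; omega)
      · exact σ_braid (by omega) (by have := i.isLt; omega))


-- ====== word machinery ======
def gz (z : ℤ) : BraidGroup 6 := if 0 < z then σ 6 z.natAbs else (σ 6 z.natAbs)⁻¹

def wp (l : List ℤ) : BraidGroup 6 := (l.map gz).prod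

lemma wp_cons (a : ℤ) (l : List ℤ) : wp (a :: l) = gz a * wp l := by
  simp [wp]

lemma wp_append (u v : List ℤ) : wp (u ++ v) = wp u * wp v := by
  simp [wp]

lemma gz_pos (i : ℕ) (h : 1 ≤ i) : gz (i : ℤ) = σ 6 i := by
  have h0 : (0:ℤ) < (i:ℤ) := by exact_mod_cast h
  simp only [gz, if_pos h0, Int.natAbs_natCast]

lemma gz_neg (i : ℕ) (h : 1 ≤ i) : gz (-(i : ℤ)) = (σ 6 i)⁻¹ := by
  have h0 : ¬ (0:ℤ) < -(i:ℤ) := by omega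
  simp only [gz, if_neg h0, Int.natAbs_neg, Int.natAbs_natCast]

lemma gz_inv (z : ℤ) (hz : z ≠ 0) : gz (-z) = (gz z)⁻¹ := by
  rcases lt_or_gt_of_ne hz with h | h
  · have h1 : ¬ (0:ℤ) < z := by omega
    have h2 : (0:ℤ) < -z := by omega
    simp only [gz, if_neg h1, if_pos h2, Int.natAbs_neg, inv_inv]
  · have h2 : ¬ (0:ℤ) < -z := by omega
    simp only [gz, if_neg h2, if_pos h, Int.natAbs_neg]

lemma mcancel (u v : List ℤ) (z : ℤ) (hz : z ≠ 0) :
    wp (u ++ z :: -z :: v) = wp (u ++ v) := by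
  have key : gz z * (gz (-z) * wp v) = wp v := by
    rw [gz_inv z hz, ← mul_assoc, mul_inv_cancel, one_mul]
  rw [wp_append, wp_append, wp_cons, wp_cons, key]

lemma commute_gz {y z : ℤ} (h1 : 1 ≤ y.natAbs) (h : y.natAbs + 2 ≤ z.natAbs)
    (h2 : z.natAbs ≤ 5) : Commute (gz y) (gz z) := by
  have base : Commute (σ 6 y.natAbs) (σ 6 z.natAbs) := σ_comm h1 h h2
  unfold gz
  split_ifs
  · exact base
  · exact base.inv_right
  · exact base.inv_left
  · exact base.inv_left.inv_right

lemma mcomm (u v : List ℤ) (y z : ℤ) (h1 : 1 ≤ y.natAbs) (h : y.natAbs + 2 ≤ z.natAbs)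
    (h2 : z.natAbs ≤ 5) : wp (u ++ y :: z :: v) = wp (u ++ z :: y :: v) := by
  rw [wp_append, wp_append, wp_cons, wp_cons, wp_cons, wp_cons]
  congr 1
  rw [← mul_assoc, ← mul_assoc, (commute_gz h1 h h2).eq]

section pushes
variable {G : Type*} [Group G] {a b : G}

private lemma hh (h : a * b * a = b * a * b) : b * (a * b) = a * (b * a) := by
  rw [← mul_assoc, ← h, mul_assoc]

lemma push_pp (h : a * b * a = b * a * b) (x : G) :
    a * (b * x) = b⁻¹ * (a * (b * (a * x))) := by
  have e : a * b = b⁻¹ * (a * (b * a)) := by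
    calc a * b = b⁻¹ * (b * (a * b)) := by group
    _ = b⁻¹ * (a * (b * a)) := by rw [hh h]
  calc a * (b * x) = (a * b) * x := by group
  _ = (b⁻¹ * (a * (b * a))) * x := by rw [e]
  _ = b⁻¹ * (a * (b * (a * x))) := by group

lemma push_pm (h : a * b * a = b * a * b) (x : G) :
    a * (b⁻¹ * x) = b⁻¹ * (a⁻¹ * (b * (a * x))) := by
  have e0 : b * (a * b⁻¹) * b = b * (b⁻¹ * (a⁻¹ * (b * a))) * b := by
    calc b * (a * b⁻¹) * b = b * a := by group
    _ = a⁻¹ * (b * (a * b)) := by rw [hh h]; group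
    _ = b * (b⁻¹ * (a⁻¹ * (b * a))) * b := by group
  have e : a * b⁻¹ = b⁻¹ * (a⁻¹ * (b * a)) := mul_left_cancel (mul_right_cancel e0)
  calc a * (b⁻¹ * x) = (a * b⁻¹) * x := by group
  _ = (b⁻¹ * (a⁻¹ * (b * a))) * x := by rw [e]
  _ = b⁻¹ * (a⁻¹ * (b * (a * x))) := by group

lemma push_mp (h : a * b * a = b * a * b) (x : G) :
    a⁻¹ * (b * x) = b * (a * (b⁻¹ * (a⁻¹ * x))) := by
  have e0 : a * (a⁻¹ * b) * a = a * (b * (a * (b⁻¹ * a⁻¹))) * a := by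
    calc a * (a⁻¹ * b) * a = b * (a * b) * b⁻¹ := by group
    _ = a * (b * a) * b⁻¹ := by rw [hh h]
    _ = a * (b * (a * (b⁻¹ * a⁻¹))) * a := by group
  have e : a⁻¹ * b = b * (a * (b⁻¹ * a⁻¹)) := mul_left_cancel (mul_right_cancel e0)
  calc a⁻¹ * (b * x) = (a⁻¹ * b) * x := by group
  _ = (b * (a * (b⁻¹ * a⁻¹))) * x := by rw [e]
  _ = b * (a * (b⁻¹ * (a⁻¹ * x))) := by group

lemma push_mm (h : a * b * a = b * a * b) (x : G) :
    a⁻¹ * (b⁻¹ * x) = b * (a⁻¹ * (b⁻¹ * (a⁻¹ * x))) := by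
  have e0 : a * (a⁻¹ * b⁻¹) * (a * b * a) = a * (b * (a⁻¹ * (b⁻¹ * a⁻¹))) * (a * b * a) := by
    calc a * (a⁻¹ * b⁻¹) * (a * b * a) = b⁻¹ * (a * (b * a)) := by group
    _ = b⁻¹ * (b * (a * b)) := by rw [hh h]
    _ = a * (b * (a⁻¹ * (b⁻¹ * a⁻¹))) * (a * b * a) := by group
  have e : a⁻¹ * b⁻¹ = b * (a⁻¹ * (b⁻¹ * a⁻¹)) := mul_left_cancel (mul_right_cancel e0)
  calc a⁻¹ * (b⁻¹ * x) = (a⁻¹ * b⁻¹) * x := by group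
  _ = (b * (a⁻¹ * (b⁻¹ * a⁻¹))) * x := by rw [e]
  _ = b * (a⁻¹ * (b⁻¹ * (a⁻¹ * x))) := by group

end pushes
section mpush

private lemma cast_succ (i : ℕ) : (i:ℤ) + 1 = ((i+1 : ℕ) : ℤ) := by push_cast; ring

private lemma braid_core {i : ℕ} (h1 : 1 ≤ i) (h2 : i ≤ 4) :
    σ 6 i * σ 6 (i+1) * σ 6 i = σ 6 (i+1) * σ 6 i * σ 6 (i+1) :=
  σ_braid h1 (by omega)

lemma mpush_pp (u v : List ℤ) (y : ℤ) (h1 : 1 ≤ y) (h2 : y ≤ 4) :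
    wp (u ++ y :: (y+1) :: v) = wp (u ++ (-(y+1)) :: y :: (y+1) :: y :: v) := by
  lift y to ℕ using (by omega : 0 ≤ y)
  have hi1 : 1 ≤ y := by exact_mod_cast h1
  have hi2 : y ≤ 4 := by exact_mod_cast h2
  rw [wp_append, wp_append, wp_cons, wp_cons, wp_cons, wp_cons, wp_cons, wp_cons,
    cast_succ, gz_pos y hi1, gz_pos (y+1) (by omega), gz_neg (y+1) (by omega),
    push_pp (braid_core hi1 hi2) (wp v)]

lemma mpush_pm (u v : List ℤ) (y : ℤ) (h1 : 1 ≤ y) (h2 : y ≤ 4) :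
    wp (u ++ y :: (-(y+1)) :: v) = wp (u ++ (-(y+1)) :: (-y) :: (y+1) :: y :: v) := by
  lift y to ℕ using (by omega : 0 ≤ y)
  have hi1 : 1 ≤ y := by exact_mod_cast h1
  have hi2 : y ≤ 4 := by exact_mod_cast h2
  rw [wp_append, wp_append, wp_cons, wp_cons, wp_cons, wp_cons, wp_cons, wp_cons,
    cast_succ, gz_pos y hi1, gz_pos (y+1) (by omega), gz_neg (y+1) (by omega),
    gz_neg y hi1, push_pm (braid_core hi1 hi2) (wp v)]

lemma mpush_mp (u v : List ℤ) (y : ℤ) (h1 : 1 ≤ y) (h2 : y ≤ 4) :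
    wp (u ++ (-y) :: (y+1) :: v) = wp (u ++ (y+1) :: y :: (-(y+1)) :: (-y) :: v) := by
  lift y to ℕ using (by omega : 0 ≤ y)
  have hi1 : 1 ≤ y := by exact_mod_cast h1
  have hi2 : y ≤ 4 := by exact_mod_cast h2
  rw [wp_append, wp_append, wp_cons, wp_cons, wp_cons, wp_cons, wp_cons, wp_cons,
    cast_succ, gz_pos y hi1, gz_pos (y+1) (by omega), gz_neg (y+1) (by omega),
    gz_neg y hi1, push_mp (braid_core hi1 hi2) (wp v)]

lemma mpush_mm (u v : List ℤ) (y : ℤ) (h1 : 1 ≤ y) (h2 : y ≤ 4) :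
    wp (u ++ (-y) :: (-(y+1)) :: v) = wp (u ++ (y+1) :: (-y) :: (-(y+1)) :: (-y) :: v) := by
  lift y to ℕ using (by omega : 0 ≤ y)
  have hi1 : 1 ≤ y := by exact_mod_cast h1
  have hi2 : y ≤ 4 := by exact_mod_cast h2
  rw [wp_append, wp_append, wp_cons, wp_cons, wp_cons, wp_cons, wp_cons, wp_cons,
    cast_succ, gz_pos (y+1) (by omega), gz_neg (y+1) (by omega),
    gz_neg y hi1, push_mm (braid_core hi1 hi2) (wp v)]

end mpush

def invw (l : List ℤ) : List ℤ := (l.map (fun z => -z)).reverse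

lemma wp_inv : ∀ l : List ℤ, (∀ z ∈ l, z ≠ 0) → wp (invw l) = (wp l)⁻¹
  | [], _ => by simp [invw, wp]
  | (a :: t), h => by
    have ha : a ≠ 0 := h a (by simp)
    have ih := wp_inv t (fun z hz => h z (by simp [hz]))
    simp only [invw, List.map_cons, List.reverse_cons] at ih ⊢
    rw [wp_append, ih, wp_cons, wp_cons, gz_inv a ha, mul_inv_rev]
    show (wp t)⁻¹ * ((gz a)⁻¹ * 1) = _
    rw [mul_one]
-- ====== reflection: a verified interpreter for elementary moves ======
def stepM (w : List ℤ) (p k : ℕ) : Option (List ℤ) :=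
  match k, w.drop p with
  | 0, a :: b :: v => if b = -a ∧ a ≠ 0 then some (w.take p ++ v) else none
  | 1, a :: b :: v =>
      if (1 ≤ a.natAbs ∧ a.natAbs + 2 ≤ b.natAbs ∧ b.natAbs ≤ 5) ∨
         (1 ≤ b.natAbs ∧ b.natAbs + 2 ≤ a.natAbs ∧ a.natAbs ≤ 5) then
        some (w.take p ++ b :: a :: v)
      else none
  | 2, a :: b :: v =>
      if 1 ≤ a ∧ a ≤ 4 then
        if b = a + 1 then some (w.take p ++ (-(a+1)) :: a :: (a+1) :: a :: v)
        else if b = -(a+1) then some (w.take p ++ (-(a+1)) :: (-a) :: (a+1) :: a :: v)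
        else none
      else if 1 ≤ -a ∧ -a ≤ 4 then
        if b = -a + 1 then some (w.take p ++ (-a+1) :: (-a) :: (-(-a+1)) :: a :: v)
        else if b = -(-a+1) then some (w.take p ++ (-a+1) :: a :: (-(-a+1)) :: a :: v)
        else none
      else none
  | _, _ => none

lemma step_sound (w : List ℤ) (p k : ℕ) (w' : List ℤ) (h : stepM w p k = some w') :
    wp w = wp w' := by
  have hw : w = w.take p ++ w.drop p := (List.take_append_drop p w).symm
  rcases hr : w.drop p with _ | ⟨a, _ | ⟨b, v⟩⟩ <;>
      rcases k with _ | _ | _ | k <;>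
      simp only [stepM, hr] at h <;>
      try (simp at h; done)
  · -- k = 0, cancel
    split_ifs at h with hc
    all_goals try (simp at h; done)
    injection h with h
    subst h
    obtain ⟨hb, ha⟩ := hc
    subst hb
    conv_lhs => rw [hw, hr]
    exact mcancel _ v a ha
  · -- k = 1, comm
    split_ifs at h with hc
    all_goals try (simp at h; done)
    injection h with h
    subst h
    conv_lhs => rw [hw, hr]
    rcases hc with ⟨h1, h2, h3⟩ | ⟨h1, h2, h3⟩
    · exact mcomm _ v a b h1 h2 h3
    · exact (mcomm _ v b a h1 h2 h3).symm
  · -- k = 2, push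
    split_ifs at h with c1 c2 c3 c4 c5 c6 <;> try (simp at h; done)
    · injection h with h
      subst h
      subst c2
      conv_lhs => rw [hw, hr]
      exact mpush_pp _ v a c1.1 c1.2
    · injection h with h
      subst h
      subst c3
      conv_lhs => rw [hw, hr]
      exact mpush_pm _ v a c1.1 c1.2
    · injection h with h
      subst h
      subst c5
      conv_lhs => rw [hw, hr]
      have key := mpush_mp (w.take p) v (-a) c4.1 c4.2
      rw [neg_neg] at key
      exact key
    · injection h with h
      subst h
      subst c6
      conv_lhs => rw [hw, hr]
      have key := mpush_mm (w.take p) v (-a) c4.1 c4.2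
      rw [neg_neg] at key
      exact key

def runM : List ℤ → List (ℕ × ℕ) → Option (List ℤ)
  | w, [] => some w
  | w, (p, k) :: ms =>
      match stepM w p k with
      | some w' => runM w' ms
      | none => none

lemma run_sound : ∀ (ms : List (ℕ × ℕ)) (w w' : List ℤ), runM w ms = some w' → wp w = wp w'
  | [], w, w', h => by
      simp only [runM] at h
      injection h with h
      rw [h]
  | (p, k) :: ms, w, w', h => by
      simp only [runM] at h
      split at h
      · next w'' hstep => exact (step_sound w p k w'' hstep).trans (run_sound ms w'' w' h)
      · exact nomatch h

private def movesL : List (ℕ × ℕ) :=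
  [(19, 1), (20, 2), (23, 1), (24, 1), (25, 1), (26, 1), (27, 2), (30, 0), (18, 2), (21, 0), (22, 1), (23, 2), (26, 1), (27, 2), (30, 0), (25, 2), (28, 0), (87, 1), (88, 1), (89, 1), (90, 1), (91, 1), (92, 1), (93, 2), (96, 0), (86, 2), (89, 1), (90, 1), (91, 1), (92, 1), (93, 2), (96, 0), (85, 0), (86, 2), (89, 1), (90, 1), (91, 2), (94, 0), (88, 2), (91, 2), (94, 0), (90, 0), (82, 1), (83, 1), (84, 2), (87, 1), (88, 1), (89, 1), (90, 1), (91, 1), (92, 1), (93, 1), (94, 1), (95, 2), (98, 1), (99, 0), (81, 1), (82, 1), (83, 0), (77, 1), (78, 1), (79, 1), (80, 1), (81, 1), (82, 0), (82, 1), (83, 2), (86, 1), (87, 1), (88, 1), (89, 1), (90, 2), (93, 1), (94, 0), (81, 0), (79, 1), (80, 0), (76, 1), (77, 1), (78, 1), (79, 0), (79, 1), (80, 2), (83, 2), (86, 1), (87, 0), (78, 0), (77, 0), (78, 0), (75, 1), (76, 0), (72, 1), (73, 1), (74, 1), (75, 1), (76, 1), (77, 1), (78, 2), (81, 1), (82,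 1), (83, 0), (71, 1), (72, 1), (73, 1), (74, 2), (77, 1), (78, 1), (79, 0), (70, 1), (71, 2), (74, 1), (75, 0), (69, 2), (72, 0), (68, 0), (67, 1), (68, 1), (69, 1), (70, 1), (71, 1), (72, 2), (75, 1), (76, 1), (77, 1), (78, 0), (66, 1), (67, 1), (68, 2), (71, 1), (72, 1), (73, 0), (65, 2), (68, 1), (69, 0), (64, 0), (62, 1), (63, 1), (64, 1), (65, 1), (66, 2), (69, 1), (70, 1), (71, 1), (72, 0), (61, 1), (62, 2), (65, 1), (66, 1), (67, 0), (60, 1), (61, 0), (17, 1), (18, 1), (19, 1), (20, 2), (23, 1), (24, 1), (25, 1), (26, 1), (27, 1), (28, 1), (29, 1), (30, 1), (31, 2), (34, 1), (35, 0), (34, 1), (35, 2), (38, 0), (16, 1), (17, 2), (20, 1), (21, 0), (33, 1), (34, 1), (35, 2), (38, 1), (39, 0), (11, 1), (12, 2), (15, 1), (16, 1), (17, 1), (18, 2), (21, 0), (10, 2), (13, 0), (14, 1), (15, 2), (18, 2), (21, 0), (17, 0), (24, 1), (25, 1), (26, 2), (29, 1), (30, 1), (31, 1), (32, 2), (35,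 1), (36, 0), (28, 1), (29, 2), (32, 1), (33, 0), (9, 1), (10, 1), (11, 1), (12, 2), (15, 1), (16, 1), (17, 1), (18, 1), (19, 1), (20, 2), (23, 1), (24, 1), (25, 1), (26, 0), (25, 2), (28, 0), (8, 1), (9, 2), (12, 1), (13, 0), (24, 1), (25, 2), (28, 1), (29, 0), (23, 1), (24, 2), (27, 0), (14, 1), (15, 1), (16, 2), (19, 2), (22, 1), (23, 0), (18, 0), (3, 1), (4, 2), (7, 1), (8, 1), (9, 1), (10, 2), (13, 0), (2, 2), (5, 0), (6, 1), (7, 2), (10, 2), (13, 0), (9, 0), (24, 1), (25, 1), (26, 2), (29, 1), (30, 1), (31, 1), (32, 0), (31, 0), (30, 0), (28, 2), (31, 0), (1, 1), (2, 1), (3, 1), (4, 2), (7, 1), (8, 1), (9, 1), (10, 1), (11, 1), (12, 2), (15, 1), (16, 1), (17, 1), (18, 0), (17, 2), (20, 0), (0, 1), (1, 2), (4, 1), (5, 0), (16, 1), (17, 2), (20, 1), (21, 0), (15, 1), (16, 2), (19, 0), (6, 1), (7, 1), (8, 2), (11, 2), (14, 1), (15, 0), (10, 0), (14, 1), (15,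 1), (16, 2), (19, 1), (20, 1), (21, 1), (22, 0), (73, 2), (76, 1), (77, 1), (78, 1), (79, 2), (82, 1), (83, 1), (84, 1), (85, 2), (88, 1), (89, 1), (90, 2), (93, 1), (94, 2), (97, 0), (96, 0), (92, 2), (95, 0), (87, 2), (90, 1), (91, 0), (69, 2), (72, 1), (73, 1), (74, 0), (75, 2), (78, 1), (79, 1), (80, 0), (81, 2), (84, 1), (85, 1), (86, 0), (95, 1), (96, 1), (97, 1), (98, 1), (99, 1), (100, 2), (103, 0), (94, 2), (97, 1), (98, 1), (99, 2), (102, 0), (96, 2), (99, 2), (102, 0), (98, 0), (93, 1), (94, 2), (97, 1), (98, 1), (99, 1), (100, 1), (101, 2), (104, 1), (105, 0), (96, 1), (97, 2), (100, 2), (103, 1), (104, 0), (99, 0), (91, 1), (92, 1), (93, 1), (94, 2), (97, 1), (98, 1), (99, 1), (100, 1), (101, 1), (102, 1), (103, 2), (106, 1), (107, 1), (108, 0), (89, 2), (92, 0), (91, 0), (90, 0), (88, 1), (89, 0), (86, 1), (87, 1), (88, 0), (83, 2), (86, 1), (87, 0), (85, 2), (88, 0), (88, 1), (89, 1), (90,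 2), (93, 2), (96, 1), (97, 1), (98, 0), (87, 0), (86, 0), (88, 0), (84, 1), (85, 0), (82, 1), (83, 1), (84, 0), (80, 1), (81, 1), (82, 1), (83, 2), (86, 1), (87, 1), (88, 1), (89, 0), (77, 2), (80, 1), (81, 0), (79, 2), (82, 0), (81, 0), (76, 1), (77, 2), (80, 1), (81, 1), (82, 0), (74, 1), (75, 1), (76, 1), (77, 2), (80, 1), (81, 1), (82, 1), (83, 0), (71, 2), (74, 1), (75, 0), (73, 2), (76, 0), (72, 1), (73, 2), (76, 1), (77, 0), (70, 1), (71, 1), (72, 1), (73, 2), (76, 1), (77, 1), (78, 0), (78, 2), (81, 1), (82, 1), (83, 1), (84, 2), (87, 1), (88, 1), (89, 1), (90, 2), (93, 1), (94, 1), (95, 2), (98, 0), (97, 0), (96, 1), (97, 0), (92, 2), (95, 1), (96, 0), (94, 2), (97, 0), (74, 2), (77, 1), (78, 1), (79, 0), (80, 2), (83, 1), (84, 1), (85, 0), (86, 2), (89, 1), (90, 1), (91, 0), (93, 1), (94, 2), (97, 1), (98, 0), (96, 2), (99, 0), (98, 0), (97, 1), (98, 1), (99, 2), (102, 0), (95,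 1), (96, 1), (97, 1), (98, 1), (99, 2), (102, 1), (103, 0), (91, 1), (92, 1), (93, 1), (94, 1), (95, 1), (96, 1), (97, 1), (98, 1), (99, 2), (102, 1), (103, 1), (104, 0), (88, 2), (91, 1), (92, 0), (90, 2), (93, 0), (101, 2), (104, 1), (105, 0), (103, 2), (106, 0), (105, 0), (89, 1), (90, 2), (93, 1), (94, 0), (92, 2), (95, 0), (94, 0), (93, 2), (96, 0), (102, 1), (103, 1), (104, 2), (107, 0), (91, 1), (92, 1), (93, 2), (96, 1), (97, 0), (100, 1), (101, 1), (102, 1), (103, 1), (104, 2), (107, 1), (108, 0), (87, 1), (88, 1), (89, 1), (90, 1), (91, 1), (92, 1), (93, 2), (96, 1), (97, 1), (98, 0), (85, 1), (86, 1), (87, 1), (88, 1), (89, 1), (90, 1), (91, 1), (92, 1), (93, 2), (96, 1), (97, 1), (98, 1), (99, 0), (82, 1), (83, 2), (86, 0), (85, 0), (94, 2), (97, 1), (98, 0), (96, 2), (99, 0), (98, 0), (97, 2), (100, 0), (95, 1), (96, 1), (97, 2), (100, 1), (101, 0), (84, 1), (85, 2), (88, 1), (89, 1), (90, 2), (93,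 0), (87, 2), (90, 2), (93, 0), (89, 0), (95, 1), (96, 1), (97, 1), (98, 1), (99, 2), (102, 1), (103, 1), (104, 0), (81, 1), (82, 1), (83, 1), (84, 1), (85, 2), (88, 1), (89, 1), (90, 1), (91, 1), (92, 2), (95, 1), (96, 0), (87, 1), (88, 2), (91, 2), (94, 1), (95, 0), (90, 0), (79, 1), (80, 1), (81, 1), (82, 1), (83, 1), (84, 1), (85, 2), (88, 1), (89, 1), (90, 1), (91, 1), (92, 1), (93, 1), (94, 2), (97, 1), (98, 1), (99, 0), (98, 0), (76, 2), (79, 1), (80, 0), (79, 0), (78, 0), (77, 1), (78, 2), (81, 0), (93, 1), (94, 1), (95, 2), (98, 0), (75, 1), (76, 1), (77, 1), (78, 2), (81, 1), (82, 0), (92, 1), (93, 1), (94, 1), (95, 2), (98, 1), (99, 0), (83, 1), (84, 1), (85, 2), (88, 2), (91, 1), (92, 1), (93, 0), (87, 0), (65, 1), (66, 1), (67, 1), (68, 1), (69, 1), (70, 1), (71, 1), (72, 1), (73, 1), (74, 1), (75, 1), (76, 1), (77, 1), (78, 2), (81, 1), (82, 1), (83, 0), (82, 2), (85, 0), (81,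 1), (82, 2), (85, 1), (86, 0), (80, 1), (81, 1), (82, 2), (85, 1), (86, 1), (87, 0), (64, 1), (65, 1), (66, 1), (67, 2), (70, 1), (71, 1), (72, 1), (73, 2), (76, 2), (79, 1), (80, 1), (81, 1), (82, 2), (85, 0), (75, 0), (63, 1), (64, 2), (67, 1), (68, 0), (62, 2), (65, 0), (61, 0), (67, 2), (70, 1), (71, 2), (74, 0), (69, 2), (72, 0), (76, 2), (79, 1), (80, 2), (83, 0), (78, 2), (81, 0), (60, 1), (61, 1), (62, 1), (63, 1), (64, 1), (65, 2), (68, 1), (69, 1), (70, 1), (71, 1), (72, 1), (73, 1), (74, 1), (75, 2), (78, 2), (81, 1), (82, 1), (83, 1), (84, 1), (85, 1), (86, 1), (87, 1), (88, 2), (91, 1), (92, 0), (77, 0), (89, 1), (90, 2), (93, 0), (88, 1), (89, 1), (90, 2), (93, 1), (94, 0), (59, 1), (60, 1), (61, 2), (64, 1), (65, 1), (66, 0), (58, 2), (61, 1), (62, 0), (57, 0), (65, 1), (66, 2), (69, 1), (70, 1), (71, 1), (72, 2), (75, 1), (76, 0), (68, 1), (69, 2), (72, 1), (73, 0), (78,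 1), (79, 2), (82, 1), (83, 1), (84, 1), (85, 2), (88, 1), (89, 0), (81, 1), (82, 2), (85, 1), (86, 0), (55, 1), (56, 1), (57, 1), (58, 1), (59, 2), (62, 1), (63, 1), (64, 1), (65, 0), (63, 2), (66, 0), (62, 1), (63, 2), (66, 1), (67, 0), (54, 1), (55, 2), (58, 1), (59, 1), (60, 0), (53, 1), (54, 0), (59, 1), (60, 1), (61, 2), (64, 1), (65, 1), (66, 0), (65, 0), (64, 0), (63, 0), (62, 1), (63, 1), (64, 0), (61, 2), (64, 1), (65, 0), (60, 0), (61, 2), (64, 0), (58, 1), (59, 1), (60, 1), (61, 1), (62, 1), (63, 0), (57, 0), (50, 1), (51, 1), (52, 1), (53, 2), (56, 1), (57, 1), (58, 1), (59, 1), (60, 1), (61, 1), (62, 0), (60, 2), (63, 0), (59, 0), (58, 2), (61, 1), (62, 0), (57, 0), (56, 0), (55, 1), (56, 1), (57, 0), (56, 0), (55, 0), (49, 1), (50, 1), (51, 1), (52, 0), (52, 1), (53, 1), (54, 1), (55, 2), (58, 1), (59, 1), (60, 0), (59, 2), (62, 0), (48, 1), (49, 2), (52, 1), (53, 0), (47,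 2), (50, 0), (46, 0), (56, 1), (57, 2), (60, 1), (61, 0), (55, 1), (56, 1), (57, 2), (60, 1), (61, 1), (62, 0), (45, 1), (46, 1), (47, 1), (48, 1), (49, 1), (50, 1), (51, 1), (52, 2), (55, 0), (44, 0), (43, 1), (44, 0), (50, 1), (51, 1), (52, 2), (55, 0), (42, 1), (43, 1), (44, 1), (45, 1), (46, 1), (47, 0), (38, 1), (39, 1), (40, 1), (41, 1), (42, 1), (43, 1), (44, 1), (45, 1), (46, 0), (45, 0), (44, 0), (37, 2), (40, 0), (36, 1), (37, 2), (40, 1), (41, 0), (40, 0), (39, 0), (38, 1), (39, 0), (35, 1), (36, 1), (37, 1), (38, 0), (34, 0), (33, 0), (31, 2), (34, 1), (35, 0), (32, 2), (35, 1), (36, 0), (34, 2), (37, 0), (36, 0), (33, 1), (34, 2), (37, 0), (36, 0), (29, 1), (30, 1), (31, 1), (32, 1), (33, 1), (34, 2), (37, 2), (40, 1), (41, 1), (42, 0), (36, 0), (28, 2), (31, 2), (34, 2), (37, 1), (38, 2), (41, 0), (27, 0), (28, 0), (29, 0), (30, 2), (33, 0), (25, 1), (26, 1), (27, 1), (28,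 1), (29, 1), (30, 1), (31, 1), (32, 1), (33, 1), (34, 2), (37, 2), (40, 1), (41, 1), (42, 1), (43, 1), (44, 1), (45, 1), (46, 0), (36, 0), (43, 0), (42, 2), (45, 0), (23, 2), (26, 1), (27, 0), (24, 2), (27, 1), (28, 0), (25, 2), (28, 1), (29, 0), (28, 0), (27, 0), (26, 1), (27, 0), (35, 1), (36, 2), (39, 1), (40, 0), (34, 0), (33, 0), (32, 0), (31, 1), (32, 1), (33, 0), (22, 1), (23, 1), (24, 1), (25, 1), (26, 1), (27, 0), (20, 2), (23, 0), (21, 2), (24, 0), (22, 2), (25, 0), (24, 0), (23, 0), (24, 1), (25, 1), (26, 1), (27, 1), (28, 1), (29, 1), (30, 1), (31, 1), (32, 1), (33, 0), (23, 1), (24, 1), (25, 1), (26, 1), (27, 1), (28, 1), (29, 1), (30, 1), (31, 1), (32, 0), (31, 2), (34, 2), (37, 0), (33, 0), (19, 2), (22, 2), (25, 2), (28, 0), (21, 0), (22, 0), (23, 0), (18, 1), (19, 2), (22, 2), (25, 2), (28, 0), (21, 0), (22, 0), (23, 0), (26, 1), (27, 2), (30, 2), (33, 1), (34, 0), (25,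 0), (24, 0), (23, 0), (23, 0), (22, 0), (17, 1), (18, 1), (19, 2), (22, 2), (25, 1), (26, 1), (27, 0), (21, 0), (16, 1), (17, 2), (20, 0), (15, 2), (18, 0), (14, 0), (13, 1), (14, 1), (15, 1), (16, 1), (17, 2), (20, 2), (23, 1), (24, 1), (25, 1), (26, 0), (12, 0), (17, 0), (11, 1), (12, 0), (10, 1), (11, 1), (12, 0), (13, 2), (16, 1), (17, 1), (18, 1), (19, 0), (15, 2), (18, 1), (19, 1), (20, 0), (17, 2), (20, 1), (21, 0), (19, 2), (22, 0), (21, 0), (20, 0), (18, 1), (19, 0), (16, 1), (17, 1), (18, 0), (14, 1), (15, 1), (16, 1), (17, 0), (12, 2), (15, 1), (16, 1), (17, 1), (18, 0), (9, 1), (10, 1), (11, 0), (12, 2), (15, 1), (16, 1), (17, 0), (14, 2), (17, 1), (18, 0), (16, 2), (19, 0), (18, 0), (5, 1), (6, 1), (7, 1), (8, 1), (9, 1), (10, 0), (4, 2), (7, 0), (7, 1), (8, 2), (11, 0), (6, 0), (5, 0), (3, 1), (4, 0), (2, 1), (3, 1), (4, 0), (3, 0), (1, 1), (2, 0), (1,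 0), (0, 0)]
private def AwL : List ℤ := [-2, -1, -3, -2, 4, 3, 5, 4]
private def BWL : List ℤ := AwL ++ AwL ++ AwL
private def F1 : List ℤ := [] ++ [1, 2, 3, 4, 5] ++ [5, 4, 3, 2, 1]
private def F2 : List ℤ := [1] ++ [1, 2, 3, 4, 5] ++ [5, 4, 3, 2]
private def F3 : List ℤ := [2, 1] ++ [1, 2, 3, 4, 5] ++ [5, 4, 3]
private def F4 : List ℤ := [3, 2, 1] ++ [1, 2, 3, 4, 5] ++ [5, 4]
private def F5 : List ℤ := [4, 3, 2, 1] ++ [1, 2, 3, 4, 5] ++ [5]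
private def F6 : List ℤ := [5, 4, 3, 2, 1] ++ [1, 2, 3, 4, 5] ++ []
private def ddL : List ℤ := [5, 4, 3, 2, 1]
private def DL : List ℤ := ddL ++ ddL ++ ddL ++ ddL ++ ddL ++ ddL
private def TWL : List ℤ := F6 ++ F5 ++ F2 ++ F1 ++ F4 ++ F3 ++ invw DL ++ invw DL

set_option maxRecDepth 100000
set_option maxHeartbeats 4000000

/-- Example 3 (the braided theta): the pure braid
`b = (σ_2⁻¹ σ_1⁻¹ σ_3⁻¹ σ_2⁻¹ σ_4 σ_3 σ_5 σ_4)^3 ∈ B_6` is topologically trivial,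
i.e. `b ∈ R_6`. -/
theorem braided_theta_topologically_trivial :
    ((σ 6 2)⁻¹ * (σ 6 1)⁻¹ * (σ 6 3)⁻¹ * (σ 6 2)⁻¹ * σ 6 4 * σ 6 3 * σ 6 5 * σ 6 4) ^ 3
      ∈ R 6 := by
  have hrun : runM (BWL ++ invw TWL) movesL = some [] := by decide
  have key : wp (BWL ++ invw TWL) = 1 := (run_sound _ _ _ hrun).trans rfl
  have hnz : ∀ z ∈ TWL, z ≠ 0 := by decide
  have k2 : wp BWL * wp (invw TWL) = 1 := by rw [← wp_append]; exact key
  rw [wp_inv TWL hnz] at k2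
  have k4 := mul_inv_eq_one.mp k2
  have hA : (σ 6 2)⁻¹ * (σ 6 1)⁻¹ * (σ 6 3)⁻¹ * (σ 6 2)⁻¹ * σ 6 4 * σ 6 3 * σ 6 5 * σ 6 4 = wp AwL := by
    have e : wp AwL = (σ 6 2)⁻¹ * ((σ 6 1)⁻¹ * ((σ 6 3)⁻¹ * ((σ 6 2)⁻¹ * (σ 6 4 * (σ 6 3 * (σ 6 5 * (σ 6 4 * 1))))))) := rfl
    rw [e]; group
  have hBW3 : ((σ 6 2)⁻¹ * (σ 6 1)⁻¹ * (σ 6 3)⁻¹ * (σ 6 2)⁻¹ * σ 6 4 * σ 6 3 * σ 6 5 * σ 6 4) ^ 3 = wp BWL := by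
    rw [hA]
    calc (wp AwL) ^ 3 = wp AwL * wp AwL * wp AwL := by rw [pow_succ, pow_succ, pow_one]
    _ = wp BWL := by rw [← wp_append, ← wp_append]; rfl
  have hf1 : flip 6 1 = wp F1 := by
    show wp [] * wp [1, 2, 3, 4, 5] * wp [5, 4, 3, 2, 1] = wp F1
    rw [← wp_append, ← wp_append]; rfl
  have hf2 : flip 6 2 = wp F2 := by
    show wp [1] * wp [1, 2, 3, 4, 5] * wp [5, 4, 3, 2] = wp F2
    rw [← wp_append, ← wp_append]; rfl
  have hf3 : flip 6 3 = wp F3 := by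
    show wp [2, 1] * wp [1, 2, 3, 4, 5] * wp [5, 4, 3] = wp F3
    rw [← wp_append, ← wp_append]; rfl
  have hf4 : flip 6 4 = wp F4 := by
    show wp [3, 2, 1] * wp [1, 2, 3, 4, 5] * wp [5, 4] = wp F4
    rw [← wp_append, ← wp_append]; rfl
  have hf5 : flip 6 5 = wp F5 := by
    show wp [4, 3, 2, 1] * wp [1, 2, 3, 4, 5] * wp [5] = wp F5
    rw [← wp_append, ← wp_append]; rfl
  have hf6 : flip 6 6 = wp F6 := by
    show wp [5, 4, 3, 2, 1] * wp [1, 2, 3, 4, 5] * wp [] = wp F6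
    rw [← wp_append, ← wp_append]; rfl
  have hd : fullTwist 6 = wp DL := by
    show (wp ddL) ^ 6 = wp DL
    calc (wp ddL) ^ 6 = wp ddL * wp ddL * wp ddL * wp ddL * wp ddL * wp ddL := by
          rw [pow_succ, pow_succ, pow_succ, pow_succ, pow_succ, pow_one]
    _ = wp DL := by rw [← wp_append, ← wp_append, ← wp_append, ← wp_append, ← wp_append]; rfl
  have hdi : (fullTwist 6)⁻¹ = wp (invw DL) := by
    rw [hd]; exact (wp_inv DL (by decide)).symm
  have eR : flip 6 6 * flip 6 5 * flip 6 2 * flip 6 1 * flip 6 4 * flip 6 3 * (fullTwist 6)⁻¹ * (fullTwist 6)⁻¹ = wp TWL := by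
    rw [hf6, hf5, hf2, hf1, hf4, hf3, hdi, ← wp_append, ← wp_append, ← wp_append, ← wp_append, ← wp_append, ← wp_append, ← wp_append]
    rfl
  have e : ((σ 6 2)⁻¹ * (σ 6 1)⁻¹ * (σ 6 3)⁻¹ * (σ 6 2)⁻¹ * σ 6 4 * σ 6 3 * σ 6 5 * σ 6 4) ^ 3 = flip 6 6 * flip 6 5 * flip 6 2 * flip 6 1 * flip 6 4 * flip 6 3 * (fullTwist 6)⁻¹ * (fullTwist 6)⁻¹ := hBW3.trans (k4.trans eR.symm)
  rw [e]
  have hdm : fullTwist 6 ∈ R 6 := Subgroup.subset_closure (Or.inl rfl)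
  have hfm : ∀ j, 1 ≤ j → j ≤ 6 → flip 6 j ∈ R 6 := fun j h1 h2 =>
    Subgroup.subset_closure (Or.inr ⟨j, ⟨h1, h2⟩, rfl⟩)
  exact mul_mem (mul_mem (mul_mem (mul_mem (mul_mem (mul_mem (mul_mem (hfm 6 (by norm_num) (by norm_num)) (hfm 5 (by norm_num) (by norm_num))) (hfm 2 (by norm_num) (by norm_num))) (hfm 1 (by norm_num) (by norm_num))) (hfm 4 (by norm_num) (by norm_num))) (hfm 3 (by norm_num) (by norm_num))) (inv_mem hdm)) (inv_mem hdm)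

end Braid
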